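/- arXiv:math/0110159 — 4 statements merged into one kernel-verified Lean document; each statement's English description precedes it below -/
import Mathlib

section
/- Under the hypotheses of the planar ILDM expansion, the second-order ILDM coefficient ψ⁽²⁾ and the second-order slow-manifold coefficient h⁽²⁾ satisfy ψ⁽²⁾ − h⁽²⁾ = −(f²/g_z²) h₀″, evaluated at (y, h₀(y), 0). In particular ψ⁽²⁾ = h⁽²⁾ for all y if and only if f² h₀″ = 0 for all y. -/
theorem stmt3 (K : Set ℝ)
    (fval fz fe gz gzz gze gee h0'' h0' h1 h1' h2 ψ1 ψ1' ψ2 : ℝ → ℝ)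
    (hgz : ∀ y ∈ K, gz y < 0)
    (hψ1 : ∀ y ∈ K, ψ1 y = h1 y) (hψ1' : ∀ y ∈ K, ψ1' y = h1' y)
    (hh2 : ∀ y ∈ K, gz y * h2 y =
      h1' y * fval y + h0' y * (fz y * h1 y + fe y)
      - (1/2) * gzz y * (h1 y)^2 - gze y * h1 y - (1/2) * gee y)
    (hψ2 : ∀ y ∈ K, gz y * ψ2 y =
      fval y * ψ1' y - (fval y)^2 / gz y * h0'' y
      + (fz y * ψ1 y + fe y) * h0' y
      - (1/2) * gzz y * (ψ1 y)^2 - gze y * ψ1 y - (1/2) * gee y) :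
    (∀ y ∈ K, ψ2 y - h2 y = -((fval y)^2 / (gz y)^2) * h0'' y) ∧
    ((∀ y ∈ K, ψ2 y = h2 y) ↔ (∀ y ∈ K, (fval y)^2 * h0'' y = 0)) := by
  have key : ∀ y ∈ K, ψ2 y - h2 y = -((fval y)^2 / (gz y)^2) * h0'' y := by
    intro y hy
    have hne : gz y ≠ 0 := ne_of_lt (hgz y hy)
    have e1 := hh2 y hy
    have e2 := hψ2 y hy
    rw [hψ1 y hy, hψ1' y hy] at e2
    have : gz y * (ψ2 y - h2 y) = -(fval y)^2 / gz y * h0'' y := by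
      rw [mul_sub, e1, e2]; ring
    field_simp at this ⊢
    nlinarith [this]
  refine ⟨key, ?_, ?_⟩
  · intro h y hy
    have hne : gz y ≠ 0 := ne_of_lt (hgz y hy)
    have := key y hy
    rw [h y hy, sub_self] at this
    have h2 : (fval y)^2 / (gz y)^2 * h0'' y = 0 := by linarith [this]
    have := div_mul_eq_mul_div ((fval y)^2) ((gz y)^2) (h0'' y)
    rw [this, div_eq_zero_iff] at h2
    rcases h2 with h2 | h2
    · exact h2
    · exact absurd h2 (pow_ne_zero 2 hne)
  · intro h y hy
    have hne : gz y ≠ 0 := ne_of_lt (hgz y hy)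
    have := key y hy
    rw [neg_mul, div_mul_eq_mul_div, h y hy] at this
    simp at this
    linarith [this]
end

section
/- For the Michaelis–Menten–Henri system, the second-order slow-manifold coefficient determined by the recursion g_z h⁽²⁾ = (h⁽¹⁾)′ f + h₀′(f_z h⁽¹⁾ + f_ε) − ½ g_zz (h⁽¹⁾)² − g_zε h⁽¹⁾ − ½ g_εε equals h⁽²⁾(y) = a b y (2ab − 3by − ay − a²)/(y+a)⁷ for y > 0. -/
theorem stmt5 (a b y : ℝ) (hab : a > b) (hb : b > 0) (hy : y > 0) :
    (-(y + a)) * (a * b * y * (2*a*b - 3*b*y - a*y - a^2) / (y + a)^7) =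
      deriv (fun u => a * b * u / (u + a)^4) y * (-(b*y) / (y + a))
      + (a / (y + a)^2) * ((y + a - b) * (a*b*y / (y + a)^4) + 0)
      - (1/2) * 0 * (a*b*y/(y+a)^4)^2 - 0 * (a*b*y/(y+a)^4) - (1/2) * 0 := by
  have hya : y + a > 0 := by linarith
  have hne : y + a ≠ 0 := ne_of_gt hya
  have hd : deriv (fun u => a * b * u / (u + a)^4) y
      = (a * b * (y + a)^4 - a * b * y * (4 * (y + a)^3)) / ((y + a)^4)^2 := by
    have h1 : HasDerivAt (fun u : ℝ => a * b * u) (a * b) y := by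
      simpa using (hasDerivAt_id y).const_mul (a * b)
    have h2 : HasDerivAt (fun u : ℝ => (u + a)^4) (4 * (y + a)^3) y := by
      have := ((hasDerivAt_id y).add_const a).fun_pow 4
      simpa [mul_comm] using this
    have := h1.fun_div h2 (by positivity)
    simpa using this.deriv
  rw [hd]
  field_simp
  ring
end

section
/- For the Michaelis–Menten–Henri system, the second-order ILDM coefficient ψ⁽²⁾(y) = aby(2ab − by − ay − a²)/(y+a)⁷ and the slow-manifold coefficient h⁽²⁾(y) = aby(2ab − 3by − ay − a²)/(y+a)⁷ satisfy ψ⁽²⁾(y) − h⁽²⁾(y) = 2ab²y²/(y+a)⁷ = −(f²/g_z²) h₀″(y), where f = −by/(y+a), g_z = −(y+a), and h₀″(y) = −2a/(y+a)³. -/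
theorem stmt6 (a b y : ℝ) (hab : a > b) (hb : b > 0) (hy : y > 0) :
    a*b*y*(2*a*b - b*y - a*y - a^2)/(y+a)^7
      - a*b*y*(2*a*b - 3*b*y - a*y - a^2)/(y+a)^7
      = 2*a*b^2*y^2/(y+a)^7 ∧
    2*a*b^2*y^2/(y+a)^7
      = -(((-(b*y)/(y+a))^2) / ((-(y+a))^2)) * (-(2*a)/(y+a)^3) := by
  have ha : a > 0 := hb.trans hab
  have h : y + a ≠ 0 := by positivity
  constructor
  · rw [div_sub_div_same, div_eq_div_iff (by positivity) (by positivity)]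
    ring
  · simp only [neg_div, neg_neg, neg_sq, div_pow, neg_mul, mul_neg, div_div, div_mul_div_comm]
    rw [div_eq_div_iff (by positivity) (by positivity)]
    ring
end

section
/- For the Michaelis–Menten–Henri model, one application of the Fraser–Roussel iteration starting from φ⁽⁰⁾(y) = y/(y+a) gives φ⁽¹⁾(y,ε) = (y + ε·(a/(y+a)²)·y)/(y + a + ε·(a/(y+a)²)·(y+a−b)), whose Taylor expansion in ε at 0 satisfies φ⁽¹⁾ = y/(y+a) + ε·aby/(y+a)⁴ − ε²·a²by(y+a−b)/(y+a)⁷ + O(ε³), for fixed y > 0. -/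
theorem stmt12 (a b y : ℝ) (hab : a > b) (hb : 0 < b) (hy : 0 < y) :
    deriv (fun u => u / (u + a)) y = a / (y + a)^2 ∧
    ∃ C > (0:ℝ), ∃ ε₀ > (0:ℝ), ∀ ε ∈ Set.Ioo (0:ℝ) ε₀,
      |(y + ε * (a/(y+a)^2) * y) / (y + a + ε * (a/(y+a)^2) * (y+a-b))
        - (y/(y+a) + ε * (a*b*y/(y+a)^4)
          - ε^2 * (a^2*b*y*(y+a-b)/(y+a)^7))| ≤ C * ε^3 := by
  have ha : 0 < a := lt_trans hb hab
  have hs : 0 < y + a := by linarith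
  have hsb : 0 < y + a - b := by linarith
  constructor
  · have h1 : HasDerivAt (fun u : ℝ => u / (u + a))
        ((1 * (y + a) - y * 1) / (y + a) ^ 2) y := by
      exact (hasDerivAt_id y).div ((hasDerivAt_id y).add_const a) (ne_of_gt hs)
    rw [h1.deriv]; ring
  · refine ⟨a^3*b*y*(y+a-b)^2/(y+a)^10, by positivity, 1, one_pos, ?_⟩
    intro ε hε
    obtain ⟨hε0, _⟩ := hε
    have hQ : y + a ≤ y + a + ε * (a/(y+a)^2) * (y+a-b) := by
      nlinarith [sq_nonneg (y+a), mul_pos (mul_pos hε0 (div_pos ha (pow_pos hs 2))) hsb]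
    have hQ0 : 0 < y + a + ε * (a/(y+a)^2) * (y+a-b) := lt_of_lt_of_le hs hQ
    have key : (y + ε * (a/(y+a)^2) * y) / (y + a + ε * (a/(y+a)^2) * (y+a-b))
        - (y/(y+a) + ε * (a*b*y/(y+a)^4)
          - ε^2 * (a^2*b*y*(y+a-b)/(y+a)^7))
        = ε^3 * (a^3*b*y*(y+a-b)^2/(y+a)^9)
            / (y + a + ε * (a/(y+a)^2) * (y+a-b)) := by
      field_simp
      ring
    rw [key, abs_of_nonneg (by positivity)]
    rw [div_le_iff₀ hQ0]
    have h9 : (0:ℝ) < (y+a)^9 := pow_pos hs 9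
    have _ := hQ
    calc ε^3 * (a^3*b*y*(y+a-b)^2/(y+a)^9)
        = (a^3*b*y*(y+a-b)^2/(y+a)^10) * ε^3 * (y+a) := by
          field_simp
      _ ≤ a^3*b*y*(y+a-b)^2/(y+a)^10 * ε^3 * (y + a + ε * (a/(y+a)^2) * (y+a-b)) := by
          gcongr
end
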